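/- Suppose a tournament T on q vertices, q > 2^{2k+1}, is edge-colored with k colors. Set ν = 2^{-(2k+2)}, and define the type of a vertex v as the pair (I(v), O(v)) where i ∈ I(v) iff the in-degree of v in color i is at least νq, and i ∈ O(v) iff the out-degree of v in color i is at least νq. Then there exists a vertex w with I(w) ∩ O(w) ≠ ∅. -/

import Mathlib

/-- In a `k`-colored tournament on `q > 2^(2k+1)` vertices there is a vertex `w`
and a color `i` such that both the in-degree and out-degree of `w` in color `i`
are at least `νq` where `ν = 2^{-(2k+2)}`. -/
theorem stmt13 {V : Type*} [Fintype V] [DecidableEq V] (k q : ℕ)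
    (hq : Fintype.card V = q) (hbig : 2 ^ (2 * k + 1) < q)
    (T : V → V → Prop) [DecidableRel T]
    (hirr : ∀ v, ¬ T v v)
    (htot : ∀ x y, x ≠ y → T x y ∨ T y x)
    (hasym : ∀ x y, T x y → ¬ T y x)
    (col : V → V → Fin k) :
    ∃ (w : V) (i : Fin k),
      ((2 : ℝ) ^ (2 * k + 2))⁻¹ * q ≤
        ((Finset.univ.filter fun u => T u w ∧ col u w = i).card : ℝ) ∧
      ((2 : ℝ) ^ (2 * k + 2))⁻¹ * q ≤
        ((Finset.univ.filter fun u => T w u ∧ col w u = i).card : ℝ) := by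
  classical
  -- the case of no colors is vacuous: then `V` must be empty, contradicting `q > 2`
  rcases Nat.eq_zero_or_pos k with hk0 | hk0
  · subst hk0
    have hV : 0 < Fintype.card V := by omega
    obtain ⟨v⟩ := Fintype.card_pos_iff.mp hV
    exact (col v v).elim0
  by_contra hcon
  push_neg at hcon
  set c : ℝ := ((2 : ℝ) ^ (2 * k + 2))⁻¹ * q with hc
  set f : V → Fin k → Bool := fun v i =>
    decide (((Finset.univ.filter fun u => T u v ∧ col u v = i).card : ℝ) < c) with hf
  -- pigeonhole: some fiber of `f` is large
  obtain ⟨g, -, hg⟩ := Finset.exists_max_image (Finset.univ : Finset (Fin k → Bool))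
      (fun g => (Finset.univ.filter fun v => f v = g).card) ⟨fun _ => true, Finset.mem_univ _⟩
  set A : Finset V := Finset.univ.filter (fun v => f v = g) with hA
  have hq2 : q ≤ 2 ^ k * A.card := by
    have h1 : (Finset.univ : Finset V).card
        = ∑ b : Fin k → Bool, ((Finset.univ : Finset V).filter fun v => f v = b).card :=
      Finset.card_eq_sum_card_fiberwise (fun x _ => Finset.mem_univ _)
    have h2 : ∑ b : Fin k → Bool, ((Finset.univ : Finset V).filter fun v => f v = b).card
        ≤ (Finset.univ : Finset (Fin k → Bool)).card • A.card :=
      Finset.sum_le_card_nsmul _ _ _ (fun b _ => hg b (Finset.mem_univ b))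
    have h3 : (Finset.univ : Finset (Fin k → Bool)).card = 2 ^ k := by simp
    calc q = (Finset.univ : Finset V).card := by rw [Finset.card_univ, hq]
    _ ≤ 2 ^ k * A.card := by rw [h1] at *; simpa [h3] using h2
  have hqpos : 0 < q := Nat.lt_of_le_of_lt (Nat.zero_le _) hbig
  have hA0 : 0 < A.card := by
    rcases Nat.eq_zero_or_pos A.card with h | h
    · rw [h, mul_zero] at hq2; omega
    · exact h
  have hAne : A.Nonempty := Finset.card_pos.mp hA0
  -- degree bounds from the definition of the type function
  have hfin : ∀ v ∈ A, ∀ i : Fin k, g i = true →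
      ((Finset.univ.filter fun u => T u v ∧ col u v = i).card : ℝ) < c := by
    intro v hv i hgi
    have hfv := (Finset.mem_filter.mp hv).2
    have h1 : f v i = true := by rw [hfv]; exact hgi
    rw [hf] at h1
    exact of_decide_eq_true h1
  have hfout : ∀ v ∈ A, ∀ i : Fin k, g i = false →
      ((Finset.univ.filter fun u => T v u ∧ col v u = i).card : ℝ) < c := by
    intro v hv i hgi
    have hfv := (Finset.mem_filter.mp hv).2
    have h1 : f v i = false := by rw [hfv]; exact hgi
    rw [hf] at h1
    have h2 := of_decide_eq_false h1
    exact hcon v i (not_lt.mp h2)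
  -- every ordered pair of distinct vertices carries exactly one edge
  have hpair : ∀ v ∈ A, ∑ u ∈ A,
      ((if T u v then (1:ℝ) else 0) + (if T v u then 1 else 0)) = (A.card : ℝ) - 1 := by
    intro v hv
    have h1 : ∀ u ∈ A, ((if T u v then (1:ℝ) else 0) + (if T v u then 1 else 0))
        = 1 - (if u = v then 1 else 0) := by
      intro u _
      by_cases huv : u = v
      · subst huv; simp [hirr u]
      · rcases htot u v huv with h | h
        · simp [h, hasym u v h, huv]
        · simp [h, hasym v u h, huv]
    rw [Finset.sum_congr rfl h1, Finset.sum_sub_distrib, Finset.sum_const,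
      Finset.sum_ite_eq' A v (fun _ => (1:ℝ))]
    simp [hv]
  have htotal : (A.card : ℝ) * ((A.card : ℝ) - 1) =
      ∑ v ∈ A, ∑ u ∈ A, ((if T u v then (1:ℝ) else 0) + (if T v u then 1 else 0)) := by
    rw [Finset.sum_congr rfl hpair, Finset.sum_const]
    simp [mul_comm]
  -- split edges by color
  have hsplit : ∀ u v : V, (if T u v then (1:ℝ) else 0) =
      ∑ i : Fin k, (if T u v ∧ col u v = i then (1:ℝ) else 0) := by
    intro u v
    by_cases h : T u v
    · simp only [h, true_and, if_true]
      rw [Finset.sum_ite_eq Finset.univ (col u v) (fun _ => (1:ℝ))]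
      simp
    · simp [h]
  have hswap : ∀ i : Fin k,
      (∑ v ∈ A, ∑ u ∈ A, (if T u v ∧ col u v = i then (1:ℝ) else 0))
      = ∑ v ∈ A, ∑ u ∈ A, (if T v u ∧ col v u = i then (1:ℝ) else 0) :=
    fun i => Finset.sum_comm
  -- each color class is small
  have hSi : ∀ i : Fin k,
      (∑ v ∈ A, ∑ u ∈ A, (if T u v ∧ col u v = i then (1:ℝ) else 0)) < A.card * c := by
    intro i
    have key : ∀ (P : V → V → Prop) [DecidablePred fun p : V × V => P p.1 p.2],
        True := fun _ _ => trivial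
    cases hgi : g i with
    | false =>
      rw [hswap i]
      have hb : ∀ v ∈ A, (∑ u ∈ A, (if T v u ∧ col v u = i then (1:ℝ) else 0)) < c := by
        intro v hv
        have h1 : (∑ u ∈ A, (if T v u ∧ col v u = i then (1:ℝ) else 0))
            = ((A.filter fun u => T v u ∧ col v u = i).card : ℝ) := by
          rw [Finset.sum_boole]
        rw [h1]
        refine lt_of_le_of_lt ?_ (hfout v hv i hgi)
        exact_mod_cast Finset.card_le_card
          (Finset.filter_subset_filter _ (Finset.subset_univ A))
      have := Finset.sum_lt_sum_of_nonempty hAne hb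
      simpa [Finset.sum_const, nsmul_eq_mul] using this
    | true =>
      have hb : ∀ v ∈ A, (∑ u ∈ A, (if T u v ∧ col u v = i then (1:ℝ) else 0)) < c := by
        intro v hv
        have h1 : (∑ u ∈ A, (if T u v ∧ col u v = i then (1:ℝ) else 0))
            = ((A.filter fun u => T u v ∧ col u v = i).card : ℝ) := by
          rw [Finset.sum_boole]
        rw [h1]
        refine lt_of_le_of_lt ?_ (hfin v hv i hgi)
        exact_mod_cast Finset.card_le_card
          (Finset.filter_subset_filter _ (Finset.subset_univ A))
      have := Finset.sum_lt_sum_of_nonempty hAne hb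
      simpa [Finset.sum_const, nsmul_eq_mul] using this
  -- combine
  have hmain : (A.card : ℝ) * ((A.card : ℝ) - 1) < 2 * k * ((A.card : ℝ) * c) := by
    have e1 : ∑ v ∈ A, ∑ u ∈ A, ((if T u v then (1:ℝ) else 0) + (if T v u then 1 else 0))
        = (∑ v ∈ A, ∑ u ∈ A, (if T u v then (1:ℝ) else 0))
          + ∑ v ∈ A, ∑ u ∈ A, (if T v u then (1:ℝ) else 0) := by
      simp [Finset.sum_add_distrib]
    have e2 : (∑ v ∈ A, ∑ u ∈ A, (if T v u then (1:ℝ) else 0))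
        = ∑ v ∈ A, ∑ u ∈ A, (if T u v then (1:ℝ) else 0) := Finset.sum_comm
    have e3 : (∑ v ∈ A, ∑ u ∈ A, (if T u v then (1:ℝ) else 0))
        = ∑ i : Fin k, ∑ v ∈ A, ∑ u ∈ A, (if T u v ∧ col u v = i then (1:ℝ) else 0) := by
      simp_rw [hsplit]
      rw [Finset.sum_congr rfl (fun v _ => Finset.sum_comm), Finset.sum_comm]
    have hkne : Nonempty (Fin k) := ⟨⟨0, hk0⟩⟩
    have hsum : (∑ i : Fin k, ∑ v ∈ A, ∑ u ∈ A,
        (if T u v ∧ col u v = i then (1:ℝ) else 0)) < (k : ℝ) * ((A.card : ℝ) * c) := by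
      have := Finset.sum_lt_sum_of_nonempty (Finset.univ_nonempty (α := Fin k))
        (fun i _ => hSi i)
      simpa [Finset.sum_const, nsmul_eq_mul, mul_assoc] using this
    rw [htotal, e1, e2, e3]
    linarith [hsum]
  -- divide by `|A|`
  have hA0' : (0:ℝ) < (A.card : ℝ) := by exact_mod_cast hA0
  have hAc : (A.card : ℝ) - 1 < 2 * k * c := by
    have h' : ((A.card:ℝ) - 1) * (A.card:ℝ) < (2 * (k:ℝ) * c) * (A.card:ℝ) := by
      nlinarith [hmain]
    exact lt_of_mul_lt_mul_right h' hA0'.le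
  -- final arithmetic contradiction
  have hx : (0:ℝ) < (2:ℝ)^k := by positivity
  have hqr : (2:ℝ)^(2*k+1) < (q:ℝ) := by exact_mod_cast hbig
  have hq2r : (q:ℝ) ≤ (2:ℝ)^k * (A.card : ℝ) := by exact_mod_cast hq2
  have hkr : (k:ℝ) < (2:ℝ)^k := by exact_mod_cast (Nat.lt_two_pow_self (n := k))
  have hk1 : (k:ℝ) + 1 ≤ 2 * (2:ℝ)^k := by
    have h1 : (1:ℝ) ≤ (2:ℝ)^k := by exact_mod_cast Nat.one_le_two_pow
    linarith [hkr, h1]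
  have hp1 : (2:ℝ)^(2*k+2) = 4 * ((2:ℝ)^k) * ((2:ℝ)^k) := by
    rw [show 2*k+2 = k + k + 2 by ring, pow_add, pow_add]; ring
  have hp2 : (2:ℝ)^(2*k+1) = 2 * ((2:ℝ)^k) * ((2:ℝ)^k) := by
    rw [show 2*k+1 = k + k + 1 by ring, pow_add, pow_add]; ring
  have hcq : c * (4 * ((2:ℝ)^k) * ((2:ℝ)^k)) = q := by
    rw [hc, hp1]
    field_simp
  have hAc2 : ((A.card:ℝ) - 1) * (4 * ((2:ℝ)^k) * ((2:ℝ)^k)) < 2 * k * q := by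
    calc ((A.card:ℝ) - 1) * (4 * ((2:ℝ)^k) * ((2:ℝ)^k))
        < (2 * k * c) * (4 * ((2:ℝ)^k) * ((2:ℝ)^k)) := by
          apply mul_lt_mul_of_pos_right hAc; positivity
      _ = 2 * k * q := by rw [mul_assoc, hcq]
  have hB : (2:ℝ)^k * (q:ℝ) ≤ (2:ℝ)^k * ((2:ℝ)^k * (A.card : ℝ)) :=
    mul_le_mul_of_nonneg_left hq2r hx.le
  have hC : 2 * ((2:ℝ)^k) * ((2:ℝ)^k) < q := by rw [← hp2]; exact hqr
  have hq0r : (0:ℝ) < q := by exact_mod_cast hqpos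
  have hD : ((k:ℝ) + 1) * q ≤ (2 * (2:ℝ)^k) * q :=
    mul_le_mul_of_nonneg_right hk1 hq0r.le
  nlinarith [hAc2, hB, hC, hD, hx, hq0r]
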